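/- The Petersen graph does not admit a 2-bisection: there is no partition of its 10 vertices into two classes of size 5 such that every connected component of the subgraph induced by either class has at most 2 vertices. -/

import Mathlib

/-- Vertices of the Petersen graph: 2-element subsets of {1,...,5} (modelled as `Fin 5`). -/
abbrev PetersenVert : Type := {p : Finset (Fin 5) // p.card = 2}

/-- The Petersen graph as the Kneser graph K(5,2): two 2-subsets are adjacent iff disjoint. -/
def Petersen : SimpleGraph PetersenVert where
  Adj a b := Disjoint a.1 b.1
  symm := ⟨fun _ _ h => Disjoint.symm h⟩
  loopless := by
    refine ⟨?_⟩
    intro a h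
    have ha : a.1 = ∅ := by simpa using disjoint_self.mp h
    have := a.2
    rw [ha] at this
    simp at this

/-- A 2-bisection of `G`: a 2-colouring of the vertices (colour classes `c v = 0` and
`c v = 1`) with colour classes of equal size such that every connected component of the
subgraph induced by each colour class has at most 2 vertices. -/
def TwoBisection {V : Type*} [Fintype V] (G : SimpleGraph V) (c : V → Fin 2) : Prop :=
  (Finset.univ.filter fun v => c v = 0).card = (Finset.univ.filter fun v => c v = 1).card ∧
  ∀ i : Fin 2, ∀ K : (G.induce {v | c v = i}).ConnectedComponent, K.supp.ncard ≤ 2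

/-- Explicit enumeration of the 10 vertices of the Petersen graph. -/
def pf : Fin 10 → PetersenVert
  | 0 => ⟨{0,1}, by decide⟩
  | 1 => ⟨{0,2}, by decide⟩
  | 2 => ⟨{0,3}, by decide⟩
  | 3 => ⟨{0,4}, by decide⟩
  | 4 => ⟨{1,2}, by decide⟩
  | 5 => ⟨{1,3}, by decide⟩
  | 6 => ⟨{1,4}, by decide⟩
  | 7 => ⟨{2,3}, by decide⟩
  | 8 => ⟨{2,4}, by decide⟩
  | 9 => ⟨{3,4}, by decide⟩

lemma pf_bij : Function.Bijective pf := by decide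

/-- Neighbour lists of the Petersen graph in the labelling `pf`. -/
def nbrs : Fin 10 → List (Fin 10)
  | 0 => [7,8,9]
  | 1 => [5,6,9]
  | 2 => [4,6,8]
  | 3 => [4,5,7]
  | 4 => [2,3,9]
  | 5 => [1,3,8]
  | 6 => [1,2,7]
  | 7 => [0,3,6]
  | 8 => [0,2,5]
  | 9 => [0,1,4]

lemma nbrs_adj : ∀ v u : Fin 10, u ∈ nbrs v → Petersen.Adj (pf v) (pf u) :=
  show ∀ v u : Fin 10, u ∈ nbrs v → Disjoint (pf v).1 (pf u).1 by decide

lemma nbrs_nodup : ∀ v : Fin 10, (nbrs v).Nodup := by decide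

/-- The combinatorial core: the colouring is balanced and each vertex has at most one
neighbour of its own colour. -/
def Q (d : Fin 10 → Fin 2) : Prop :=
  (Finset.univ.filter fun i => d i = 0).card = 5 ∧
  ∀ v : Fin 10, ((nbrs v).countP fun u => d u == d v) ≤ 1

set_option maxHeartbeats 1000000 in
lemma no_Q' : ∀ b0 b1 b2 b3 b4 b5 b6 b7 b8 b9 : Fin 2,
    ¬ Q ![b0,b1,b2,b3,b4,b5,b6,b7,b8,b9] := by
  simp only [Q]
  decide

lemma no_Q : ∀ d : Fin 10 → Fin 2, ¬ Q d := by
  intro d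
  have h : d = ![d 0, d 1, d 2, d 3, d 4, d 5, d 6, d 7, d 8, d 9] := by
    funext i; fin_cases i <;> rfl
  rw [h]
  exact no_Q' _ _ _ _ _ _ _ _ _ _

lemma countP_le_one {α : Type*} (p : α → Bool) :
    ∀ (l : List α), l.Nodup →
      (∀ u ∈ l, ∀ w ∈ l, u ≠ w → ¬(p u = true ∧ p w = true)) → l.countP p ≤ 1
  | [], _, _ => by simp
  | x :: xs, hnd, h => by
    rw [List.countP_cons]
    by_cases hx : p x = true
    · have h0 : xs.countP p = 0 := List.countP_eq_zero.mpr (fun w hw hpw =>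
        h x List.mem_cons_self w (List.mem_cons_of_mem _ hw)
          (fun he => (List.nodup_cons.mp hnd).1 (he ▸ hw)) ⟨hx, hpw⟩)
      simp [h0, hx]
    · have := countP_le_one p xs (List.nodup_cons.mp hnd).2
        (fun u hu w hw hne => h u (List.mem_cons_of_mem _ hu) w (List.mem_cons_of_mem _ hw) hne)
      simp only [hx, if_neg]
      simpa [hx] using this

/-- From a 2-bisection, there is no monochromatic path on 3 vertices. -/
lemma no_cherry {V : Type*} [Fintype V] {G : SimpleGraph V} {c : V → Fin 2}
    (h : TwoBisection G c) {v u w : V} (hvu : G.Adj v u) (hvw : G.Adj v w)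
    (huw : u ≠ w) (hu : c u = c v) (hw : c w = c v) : False := by
  classical
  set S : Set V := {x | c x = c v} with hS
  have hvS : v ∈ S := rfl
  have huS : u ∈ S := hu
  have hwS : w ∈ S := hw
  set a : ↥S := ⟨u, huS⟩ with ha
  set b : ↥S := ⟨v, hvS⟩ with hb
  set e : ↥S := ⟨w, hwS⟩ with he
  have hab : (G.induce S).Adj a b := hvu.symm
  have hbe : (G.induce S).Adj b e := hvw
  set K := (G.induce S).connectedComponentMk b with hK
  have hmem : ({a, b, e} : Set ↥S) ⊆ K.supp := by
    intro x hx
    rcases hx with h1 | h1 | h1 <;> subst h1 <;>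
        simp only [SimpleGraph.ConnectedComponent.mem_supp_iff, hK] <;>
      first
        | rfl
        | exact SimpleGraph.ConnectedComponent.sound hab.reachable
        | exact (SimpleGraph.ConnectedComponent.sound hbe.reachable).symm
  have hne_ab : a ≠ b := fun h => hvu.ne' (congrArg Subtype.val h)
  have hne_be : b ≠ e := fun h => hvw.ne (congrArg Subtype.val h)
  have hne_ae : a ≠ e := fun h => huw (congrArg Subtype.val h)
  have h3 : ({a, b, e} : Set ↥S).ncard = 3 :=
    Set.ncard_eq_three.mpr ⟨a, b, e, hne_ab, hne_ae, hne_be, rfl⟩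
  have hle := Set.ncard_le_ncard hmem (Set.toFinite _)
  rw [h3] at hle
  exact absurd (hle.trans (h.2 (c v) K)) (by norm_num)

/-- The Petersen graph does not admit a 2-bisection: there is no partition of its 10
vertices into two classes of size 5 such that every connected component of the subgraph
induced by either class has at most 2 vertices. -/
theorem petersen_no_two_bisection : ¬ ∃ c : PetersenVert → Fin 2, TwoBisection Petersen c := by
  rintro ⟨c, hc⟩
  apply no_Q (c ∘ pf)
  constructor
  · -- balance
    have hA : ∀ j : Fin 2, (Finset.univ.filter fun i : Fin 10 => c (pf i) = j).card =
        (Finset.univ.filter fun v : PetersenVert => c v = j).card := by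
      intro j
      apply Finset.card_bij (fun i _ => pf i)
      · intro i hi
        simp only [Finset.mem_filter, Finset.mem_univ, true_and] at hi ⊢
        exact hi
      · intro i _ i' _ h
        exact pf_bij.1 h
      · intro b hb
        obtain ⟨i, rfl⟩ := pf_bij.2 b
        simp only [Finset.mem_filter, Finset.mem_univ, true_and] at hb
        exact ⟨i, by simp [hb], rfl⟩
    have hswap : ∀ x : Fin 2, (x = 1) ↔ ¬(x = 0) := by decide
    have htot : (Finset.univ.filter fun i : Fin 10 => c (pf i) = 0).card +
        (Finset.univ.filter fun i : Fin 10 => c (pf i) = 1).card = 10 := by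
      have := Finset.card_filter_add_card_filter_not
        (s := (Finset.univ : Finset (Fin 10))) (p := fun i => c (pf i) = 0)
      rw [Finset.filter_congr (fun i _ => hswap (c (pf i)))]
      simpa using this
    have h01 : (Finset.univ.filter fun i : Fin 10 => c (pf i) = 0).card =
        (Finset.univ.filter fun i : Fin 10 => c (pf i) = 1).card := by
      rw [hA 0, hA 1]; exact hc.1
    simp only [Function.comp]
    omega
  · -- no vertex has two neighbours of its own colour
    intro v
    apply countP_le_one _ _ (nbrs_nodup v)
    intro x hx y hy hxy ⟨hpx, hpy⟩
    exact no_cherry hc (nbrs_adj v x hx) (nbrs_adj v y hy)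
      (fun h => hxy (pf_bij.1 h))
      (eq_of_beq hpx) (eq_of_beq hpy)
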